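/- Let p be a prime and m ≥ 0, n ≥ 1 integers with n ≥ 3m. Let σ_m = (diag(p^{3m}, p^{2m}, p^{m}, 1), diag(p^{2m}, p^{m})) ∈ G(ℚ_p). Then σ_m · B_{m,n} · σ_m⁻¹ ⊆ G(ℤ_p). -/
import Mathlib


open Pointwise

noncomputable section

/-- The ambient ring containing `G(ℚ_ℓ) = (GSp₄ ×_{GL₁} GL₂)(ℚ_ℓ)`:
pairs of a 4×4 and a 2×2 matrix over `ℚ_ℓ`. -/
abbrev MG (p : ℕ) [Fact p.Prime] :=
  Matrix (Fin 4) (Fin 4) ℚ_[p] × Matrix (Fin 2) (Fin 2) ℚ_[p]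

/-- The standard skew-symmetric matrix `J` defining `GSp₄`. -/
def Jmat (p : ℕ) [Fact p.Prime] : Matrix (Fin 4) (Fin 4) ℚ_[p] :=
  !![0, 0, 0, 1; 0, 0, 1, 0; 0, -1, 0, 0; -1, 0, 0, 0]

/-- `G(ℤ_ℓ)`: pairs `(g, h)` with `g ∈ GSp₄(ℤ_ℓ)`, `h ∈ GL₂(ℤ_ℓ)` and
`μ(g) = det h`. -/
def GZ (p : ℕ) [Fact p.Prime] : Set (MG p) :=
  {x | (∀ i j, ‖x.1 i j‖ ≤ 1) ∧ (∀ i j, ‖x.2 i j‖ ≤ 1) ∧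
    ‖x.1.det‖ = 1 ∧ ‖x.2.det‖ = 1 ∧
    x.1.transpose * Jmat p * x.1 = x.2.det • Jmat p}

/-- The subgroup `B_{m,n}` of `G(ℤ_ℓ)`: pairs `(g, h)` with `μ(g) ≡ 1 (mod ℓ^m)`, the
entries of `g` below the diagonal divisible by `ℓⁿ`, the (4,4)-entry of `g` `≡ 1 (mod ℓⁿ)`,
and the (2,1)-entry of `h` divisible by `ℓⁿ`. -/
def Bmn (p : ℕ) [Fact p.Prime] (m n : ℕ) : Set (MG p) :=
  {x ∈ GZ p | ‖x.2.det - 1‖ ≤ (p : ℝ) ^ (-(m : ℤ)) ∧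
    ‖x.1 1 0‖ ≤ (p : ℝ) ^ (-(n : ℤ)) ∧ ‖x.1 2 0‖ ≤ (p : ℝ) ^ (-(n : ℤ)) ∧
    ‖x.1 2 1‖ ≤ (p : ℝ) ^ (-(n : ℤ)) ∧ ‖x.1 3 0‖ ≤ (p : ℝ) ^ (-(n : ℤ)) ∧
    ‖x.1 3 1‖ ≤ (p : ℝ) ^ (-(n : ℤ)) ∧ ‖x.1 3 2‖ ≤ (p : ℝ) ^ (-(n : ℤ)) ∧
    ‖x.1 3 3 - 1‖ ≤ (p : ℝ) ^ (-(n : ℤ)) ∧ ‖x.2 1 0‖ ≤ (p : ℝ) ^ (-(n : ℤ))}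

/-- The element `σ_m = (diag(p^{3m}, p^{2m}, p^m, 1), diag(p^{2m}, p^m))`. -/
def sigmaElt (p : ℕ) [Fact p.Prime] (m : ℕ) : MG p :=
  (Matrix.diagonal ![(p : ℚ_[p]) ^ (3 * m), (p : ℚ_[p]) ^ (2 * m), (p : ℚ_[p]) ^ m, 1],
    Matrix.diagonal ![(p : ℚ_[p]) ^ (2 * m), (p : ℚ_[p]) ^ m])

/-- The inverse `σ_m⁻¹ = (diag(p^{-3m}, p^{-2m}, p^{-m}, 1), diag(p^{-2m}, p^{-m}))`. -/
def sigmaEltInv (p : ℕ) [Fact p.Prime] (m : ℕ) : MG p :=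
  (Matrix.diagonal ![(p : ℚ_[p]) ^ (-(3 * m : ℤ)), (p : ℚ_[p]) ^ (-(2 * m : ℤ)),
      (p : ℚ_[p]) ^ (-(m : ℤ)), 1],
    Matrix.diagonal ![(p : ℚ_[p]) ^ (-(2 * m : ℤ)), (p : ℚ_[p]) ^ (-(m : ℤ))])

section Aux

variable (p : ℕ) [Fact p.Prime]

lemma hpne : ((p:ℚ_[p]) ≠ 0) := Nat.cast_ne_zero.mpr (Fact.out : p.Prime).ne_zero

lemma bnd (e f c : ℤ) (x : ℚ_[p]) (hx : ‖x‖ ≤ (p : ℝ) ^ c) (h : c ≤ e + f) :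
    ‖(p:ℚ_[p]) ^ e * x * (p:ℚ_[p]) ^ f‖ ≤ 1 := by
  have hp1 : (1:ℝ) < p := by exact_mod_cast (Fact.out : p.Prime).one_lt
  have h0 : (0:ℝ) < p := by linarith
  rw [norm_mul, norm_mul, Padic.norm_p_zpow, Padic.norm_p_zpow]
  calc (p:ℝ)^(-e) * ‖x‖ * (p:ℝ)^(-f) ≤ (p:ℝ)^(-e) * (p:ℝ)^c * (p:ℝ)^(-f) := by
        gcongr
    _ = (p:ℝ)^(-e + c + -f) := by rw [← zpow_add₀ (ne_of_gt h0), ← zpow_add₀ (ne_of_gt h0)]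
    _ ≤ (p:ℝ)^(0:ℤ) := by
        apply zpow_le_zpow_right₀ hp1.le; omega
    _ = 1 := zpow_zero _

lemma bndNZ (e : ℕ) (f c : ℤ) (x : ℚ_[p]) (hx : ‖x‖ ≤ (p : ℝ) ^ c) (h : c ≤ e + f) :
    ‖(p:ℚ_[p]) ^ e * x * (p:ℚ_[p]) ^ f‖ ≤ 1 := by
  rw [← zpow_natCast (p:ℚ_[p]) e]; exact bnd p e f c x hx h

lemma bndN (e : ℕ) (c : ℤ) (x : ℚ_[p]) (hx : ‖x‖ ≤ (p : ℝ) ^ c) (h : c ≤ e) :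
    ‖(p:ℚ_[p]) ^ e * x‖ ≤ 1 := by
  simpa using bndNZ p e 0 c x hx (by omega)

lemma bndZ (f c : ℤ) (x : ℚ_[p]) (hx : ‖x‖ ≤ (p : ℝ) ^ c) (h : c ≤ f) :
    ‖x * (p:ℚ_[p]) ^ f‖ ≤ 1 := by
  simpa using bnd p 0 f c x hx (by omega)

lemma rb1 (a b c : ℤ) (r : ℝ) (h0 : 0 ≤ r) (hx : r ≤ (p:ℝ)^c) (h : c + b ≤ a) :
    ((p:ℝ)^a)⁻¹ * r * (p:ℝ)^b ≤ 1 := by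
  have hp1 : (1:ℝ) < p := by exact_mod_cast (Fact.out : p.Prime).one_lt
  have hp0 : (0:ℝ) < p := by linarith
  rw [← zpow_neg]
  calc (p:ℝ)^(-a) * r * (p:ℝ)^b ≤ (p:ℝ)^(-a) * (p:ℝ)^c * (p:ℝ)^b := by gcongr
    _ = (p:ℝ)^(-a + c + b) := by rw [← zpow_add₀ hp0.ne', ← zpow_add₀ hp0.ne']
    _ ≤ (p:ℝ)^(0:ℤ) := by apply zpow_le_zpow_right₀ hp1.le; omega
    _ = 1 := zpow_zero _

lemma rb2 (a c : ℤ) (r : ℝ) (h0 : 0 ≤ r) (hx : r ≤ (p:ℝ)^c) (h : c ≤ a) :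
    ((p:ℝ)^a)⁻¹ * r ≤ 1 := by
  simpa using rb1 p a 0 c r h0 hx (by omega)

lemma rb3 (b c : ℤ) (r : ℝ) (h0 : 0 ≤ r) (hx : r ≤ (p:ℝ)^c) (h : c + b ≤ 0) :
    r * (p:ℝ)^b ≤ 1 := by
  simpa using rb1 p 0 b c r h0 hx (by omega)

lemma rb4 (c : ℤ) (r : ℝ) (hx : r ≤ (p:ℝ)^c) (h : c ≤ 0) : r ≤ 1 := by
  have hp1 : (1:ℝ) < p := by exact_mod_cast (Fact.out : p.Prime).one_lt
  calc r ≤ (p:ℝ)^c := hx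
    _ ≤ (p:ℝ)^(0:ℤ) := by apply zpow_le_zpow_right₀ hp1.le; omega
    _ = 1 := zpow_zero _

lemma pkinv (k : ℕ) : (p:ℚ_[p]) ^ k * ((p:ℚ_[p]) ^ ((k:ℤ)))⁻¹ = 1 := by
  rw [← zpow_natCast (p:ℚ_[p]) k]; exact mul_inv_cancel₀ (zpow_ne_zero _ (hpne p))

lemma pkinv' (k : ℕ) : ((p:ℚ_[p]) ^ ((k:ℤ)))⁻¹ * (p:ℚ_[p]) ^ k = 1 := by
  rw [mul_comm]; exact pkinv p k

lemma pk (k : ℕ) : (p:ℚ_[p]) ^ k * (p:ℚ_[p]) ^ (-(k:ℤ)) = 1 := by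
  rw [← zpow_natCast (p:ℚ_[p]) k, ← zpow_add₀ (hpne p)]; simp

lemma pk' (k : ℕ) : (p:ℚ_[p]) ^ (-(k:ℤ)) * (p:ℚ_[p]) ^ k = 1 := by
  rw [mul_comm]; exact pk p k

end Aux

set_option maxHeartbeats 4000000 in
/-- For `n ≥ 3m`, the conjugate `σ_m · B_{m,n} · σ_m⁻¹` is contained in `G(ℤ_p)`. -/
theorem stmt16 (p : ℕ) [Fact p.Prime] (m n : ℕ) (hn : 1 ≤ n) (hnm : 3 * m ≤ n) :
    ({sigmaElt p m} : Set (MG p)) * Bmn p m n * {sigmaEltInv p m} ⊆ GZ p := by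

  intro y hy
  rw [Set.mem_mul] at hy
  obtain ⟨z, hz, w, hw, rfl⟩ := hy
  rw [Set.mem_mul] at hz
  obtain ⟨s, hs, x, hx, rfl⟩ := hz
  rw [Set.mem_singleton_iff] at hs hw
  subst hs; subst hw
  obtain ⟨⟨h1, h2, h3, h4, h5⟩, hdetm, h10, h20, h21, h30, h31, h32, h33, hh10⟩ := hx
  have h1Z : ∀ i j, ‖x.1 i j‖ ≤ (p:ℝ) ^ (0:ℤ) := by simpa using h1
  have h2Z : ∀ i j, ‖x.2 i j‖ ≤ (p:ℝ) ^ (0:ℤ) := by simpa using h2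
  -- key matrix identities
  have hDD1 : (sigmaElt p m).1 * (sigmaEltInv p m).1 = 1 := by
    ext i j
    simp only [sigmaElt, sigmaEltInv, Matrix.diagonal_mul_diagonal]
    fin_cases i <;> fin_cases j <;>
      simp [Matrix.diagonal, Matrix.one_apply] <;>
      first
        | (have := pkinv p (3*m); push_cast at this ⊢; linear_combination this)
        | (have := pkinv p (2*m); push_cast at this ⊢; linear_combination this)
        | (have := pkinv p m; push_cast at this ⊢; linear_combination this)
  have hD'D1 : (sigmaEltInv p m).1 * (sigmaElt p m).1 = 1 := by
    ext i j
    simp only [sigmaElt, sigmaEltInv, Matrix.diagonal_mul_diagonal]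
    fin_cases i <;> fin_cases j <;>
      simp [Matrix.diagonal, Matrix.one_apply] <;>
      first
        | (have := pkinv' p (3*m); push_cast at this ⊢; linear_combination this)
        | (have := pkinv' p (2*m); push_cast at this ⊢; linear_combination this)
        | (have := pkinv' p m; push_cast at this ⊢; linear_combination this)
  have hEE1 : (sigmaElt p m).2 * (sigmaEltInv p m).2 = 1 := by
    ext i j
    simp only [sigmaElt, sigmaEltInv, Matrix.diagonal_mul_diagonal]
    fin_cases i <;> fin_cases j <;>
      simp [Matrix.diagonal, Matrix.one_apply] <;>
      first
        | (have := pkinv p (2*m); push_cast at this ⊢; linear_combination this)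
        | (have := pkinv p m; push_cast at this ⊢; linear_combination this)
  have hDdet : ((sigmaElt p m).1).det * ((sigmaEltInv p m).1).det = 1 := by
    rw [← Matrix.det_mul, hDD1, Matrix.det_one]
  have hEdet : ((sigmaElt p m).2).det * ((sigmaEltInv p m).2).det = 1 := by
    rw [← Matrix.det_mul, hEE1, Matrix.det_one]
  have hDJD : (sigmaElt p m).1 * Jmat p * (sigmaElt p m).1
      = ((p:ℚ_[p]) ^ (3*m)) • Jmat p := by
    ext i j
    simp only [sigmaElt, Jmat, Matrix.diagonal_mul, Matrix.mul_diagonal,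
      Matrix.smul_apply, smul_eq_mul]
    fin_cases i <;> fin_cases j <;>
      simp [Matrix.vecHead, Matrix.vecTail] <;> ring
  refine ⟨?_, ?_, ?_, ?_, ?_⟩
  · -- entries of the 4x4 part
    intro i j
    show ‖((sigmaElt p m).1 * x.1 * (sigmaEltInv p m).1) i j‖ ≤ 1
    simp only [sigmaElt, sigmaEltInv, Matrix.mul_diagonal, Matrix.diagonal_mul]
    fin_cases i <;> fin_cases j <;>
      simp [Matrix.vecHead, Matrix.vecTail] <;>
      (try simp only [← zpow_natCast (p:ℝ)]) <;>
      first
        | exact rb1 p _ _ _ _ (norm_nonneg _) (h1Z _ _) (by omega)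
        | exact rb1 p _ _ _ _ (norm_nonneg _) h10 (by omega)
        | exact rb1 p _ _ _ _ (norm_nonneg _) h20 (by omega)
        | exact rb1 p _ _ _ _ (norm_nonneg _) h21 (by omega)
        | exact rb2 p _ _ _ (norm_nonneg _) (h1Z _ _) (by omega)
        | exact rb3 p _ _ _ (norm_nonneg _) h30 (by omega)
        | exact rb3 p _ _ _ (norm_nonneg _) h31 (by omega)
        | exact rb3 p _ _ _ (norm_nonneg _) h32 (by omega)
        | exact rb4 p _ _ (h1Z _ _) (by omega)
        | exact h1 _ _
  · -- entries of the 2x2 part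
    intro i j
    show ‖((sigmaElt p m).2 * x.2 * (sigmaEltInv p m).2) i j‖ ≤ 1
    simp only [sigmaElt, sigmaEltInv, Matrix.mul_diagonal, Matrix.diagonal_mul]
    fin_cases i <;> fin_cases j <;>
      simp [Matrix.vecHead, Matrix.vecTail] <;>
      (try simp only [← zpow_natCast (p:ℝ)]) <;>
      first
        | exact rb1 p _ _ _ _ (norm_nonneg _) (h2Z _ _) (by omega)
        | exact rb1 p _ _ _ _ (norm_nonneg _) hh10 (by omega)
        | exact rb2 p _ _ _ (norm_nonneg _) (h2Z _ _) (by omega)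
        | exact rb3 p _ _ _ (norm_nonneg _) hh10 (by omega)
        | exact rb4 p _ _ (h2Z _ _) (by omega)
        | exact h2 _ _
  · -- norm of det of 4x4 part
    show ‖((sigmaElt p m).1 * x.1 * (sigmaEltInv p m).1).det‖ = 1
    rw [Matrix.det_mul, Matrix.det_mul, mul_right_comm, hDdet, one_mul]
    exact h3
  · -- norm of det of 2x2 part
    show ‖((sigmaElt p m).2 * x.2 * (sigmaEltInv p m).2).det‖ = 1
    rw [Matrix.det_mul, Matrix.det_mul, mul_right_comm, hEdet, one_mul]
    exact h4
  · -- symplectic similitude condition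
    show ((sigmaElt p m).1 * x.1 * (sigmaEltInv p m).1).transpose * Jmat p *
        ((sigmaElt p m).1 * x.1 * (sigmaEltInv p m).1)
      = ((sigmaElt p m).2 * x.2 * (sigmaEltInv p m).2).det • Jmat p
    have hdet2 : ((sigmaElt p m).2 * x.2 * (sigmaEltInv p m).2).det = x.2.det := by
      rw [Matrix.det_mul, Matrix.det_mul, mul_right_comm, hEdet, one_mul]
    rw [hdet2]
    set D := (sigmaElt p m).1 with hD
    set D' := (sigmaEltInv p m).1 with hD'
    set c : ℚ_[p] := (p:ℚ_[p]) ^ (3*m) with hc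
    have hcne : c ≠ 0 := pow_ne_zero _ (hpne p)
    have hT : (D * x.1 * D').transpose = D' * x.1.transpose * D := by
      rw [Matrix.transpose_mul, Matrix.transpose_mul]
      rw [hD, hD', sigmaElt, sigmaEltInv]
      simp [Matrix.diagonal_transpose, Matrix.mul_assoc]
    have h6 : D' * (D * Jmat p * D) * D' = Jmat p := by
      calc D' * (D * Jmat p * D) * D' = (D' * D) * Jmat p * (D * D') := by
            simp only [Matrix.mul_assoc]
        _ = Jmat p := by rw [hD'D1, hDD1, Matrix.one_mul, Matrix.mul_one]
    have h7 : c • (D' * Jmat p * D') = Jmat p := by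
      have h6' := h6
      rw [hDJD, Matrix.mul_smul, Matrix.smul_mul] at h6'
      exact h6'
    have hD'JD' : D' * Jmat p * D' = c⁻¹ • Jmat p := by
      have h8 := congrArg (fun M => c⁻¹ • M) h7
      simpa [smul_smul, inv_mul_cancel₀ hcne] using h8
    calc (D * x.1 * D').transpose * Jmat p * (D * x.1 * D')
        = D' * x.1.transpose * (D * Jmat p * D) * x.1 * D' := by
          rw [hT]; simp only [Matrix.mul_assoc]
      _ = D' * x.1.transpose * (c • Jmat p) * x.1 * D' := by rw [hDJD]
      _ = c • (D' * (x.1.transpose * Jmat p * x.1) * D') := by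
          simp only [Matrix.mul_smul, Matrix.smul_mul, Matrix.mul_assoc]
      _ = c • (D' * (x.2.det • Jmat p) * D') := by rw [h5]
      _ = (c * x.2.det) • (D' * Jmat p * D') := by
          simp only [Matrix.mul_smul, Matrix.smul_mul, smul_smul]
      _ = (c * x.2.det) • (c⁻¹ • Jmat p) := by rw [hD'JD']
      _ = x.2.det • Jmat p := by
          rw [smul_smul, mul_right_comm, mul_inv_cancel₀ hcne, one_mul]
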